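/- The joint distribution placing mass 1/6 on each of the six nonzero-payoff action profiles of the modified Shapley game (with 0 < ε < 1) cannot be written as a product of two independent marginal distributions, one for each player. -/
import Mathlib


open Finset

noncomputable def qS : Fin 3 → Fin 3 → ℝ := fun a b =>
  if (a, b) ∈ ({(0,0), (0,1), (1,1), (1,2), (2,2), (2,0)} : Finset (Fin 3 × Fin 3))
  then 1/6 else 0

/-- The efficient joint distribution of the modified Shapley game (0 < ε < 1) is not a
product of independent marginal distributions. -/
theorem shapley_q_not_product (ε : ℝ) (hε0 : 0 < ε) (hε1 : ε < 1) :
    ¬ ∃ (p₁ p₂ : Fin 3 → ℝ),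
      (∀ a, 0 ≤ p₁ a) ∧ (∑ a : Fin 3, p₁ a = 1) ∧
      (∀ b, 0 ≤ p₂ b) ∧ (∑ b : Fin 3, p₂ b = 1) ∧
      (∀ a b, qS a b = p₁ a * p₂ b) := by
  rintro ⟨p₁, p₂, -, -, -, -, h⟩
  have h00 := h 0 0
  have h10 := h 1 0
  have h11 := h 1 1
  simp only [qS] at h00 h10 h11
  norm_num at h00 h10 h11
  rcases mul_eq_zero.mp h10.symm with h10 | h10
  · rw [h10] at h11; norm_num at h11
  · rw [h10] at h00; norm_num at h00
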